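/- For all x,z,a,b ∈ {0,1} there exists a complex number c with |c| = 1 such that Z^{x⊕z⊕b} X^{x⊕a} · X^a Z^b · P^x · T · X^x Z^z = c · T as 2×2 matrices. (Correctness of decryption after homomorphic evaluation of the T-gate with updated key x' = x⊕a, z' = x⊕z⊕b; the core of Proposition 2.) -/

import Mathlib

open Matrix

/-- Pauli X gate. -/
noncomputable def Xg : Matrix (Fin 2) (Fin 2) ℂ := !![0, 1; 1, 0]

/-- Pauli Z gate. -/
noncomputable def Zg : Matrix (Fin 2) (Fin 2) ℂ := !![1, 0; 0, -1]

/-- Phase gate `P = diag(1, i)`. -/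
noncomputable def Pg : Matrix (Fin 2) (Fin 2) ℂ := !![1, 0; 0, Complex.I]

/-- T gate `T = diag(1, e^{iπ/4})`. -/
noncomputable def Tg : Matrix (Fin 2) (Fin 2) ℂ :=
  !![1, 0; 0, Complex.exp (Complex.I * Real.pi / 4)]

set_option maxHeartbeats 2000000 in
/-- Correctness of decryption after the homomorphic evaluation of the T-gate
with updated key `x' = x⊕a`, `z' = x⊕z⊕b`: for all bits `x, z, a, b`,
`Z^{x⊕z⊕b} X^{x⊕a} · X^a Z^b · P^x · T · X^x Z^z = c · T` for some phase `c`
(`+` in `Fin 2` is XOR). -/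
theorem T_homomorphic_decrypt (x z a b : Fin 2) :
    ∃ c : ℂ, ‖c‖ = 1 ∧
      Zg ^ ((x + z + b : Fin 2) : ℕ) * Xg ^ ((x + a : Fin 2) : ℕ)
          * (Xg ^ (a : ℕ) * Zg ^ (b : ℕ)) * Pg ^ (x : ℕ) * Tg
          * (Xg ^ (x : ℕ) * Zg ^ (z : ℕ))
        = c • Tg := by
  set E : ℂ := Complex.exp (Complex.I * Real.pi / 4) with hEdef
  have habs : ∀ n : ℕ, ‖E ^ n‖ = 1 := by
    intro n
    rw [norm_pow, hEdef, Complex.norm_exp]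
    norm_num [Complex.mul_re, Complex.div_re]
  have h2 : E * E = Complex.I := by
    rw [hEdef, ← Complex.exp_add]
    rw [show Complex.I * Real.pi / 4 + Complex.I * Real.pi / 4
        = ((Real.pi / 2 : ℝ) : ℂ) * Complex.I by push_cast; ring]
    rw [Complex.exp_mul_I]
    norm_num [Complex.ofReal_cos, Complex.ofReal_sin, ← Complex.ofReal_cos,
      Real.cos_pi_div_two, Real.sin_pi_div_two]
  have hI : Complex.I = E ^ 2 := by rw [sq, h2]
  have h4 : E ^ 4 = -1 := by
    rw [show E ^ 4 = E * E * (E * E) by ring, h2, Complex.I_mul_I]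
  refine ⟨if x = 0 then 1 else if b = 0 then E ^ 3 else E ^ 7, ?_, ?_⟩
  · fin_cases x <;> fin_cases b <;> simp [habs]
  · fin_cases x <;> fin_cases z <;> fin_cases a <;> fin_cases b <;>
      · ext i j
        fin_cases i <;> fin_cases j <;>
          simp [Xg, Zg, Pg, Tg, Matrix.mul_apply, Fin.sum_univ_two, ← hEdef] <;>
          (try simp only [hI]) <;>
          (first
            | ring1
            | linear_combination h4
            | linear_combination E * h4
            | linear_combination E ^ 2 * h4
            | linear_combination E ^ 3 * h4
            | linear_combination (-1 : ℂ) * h4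
            | linear_combination (-E) * h4
            | linear_combination (-E ^ 2) * h4
            | linear_combination (-E ^ 3) * h4
            | linear_combination (E ^ 4 - 1) * h4
            | linear_combination (1 - E ^ 4) * h4)
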